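/- Let K be a compact Hausdorff space such that every bounded linear operator on C(K) is a weak multiplication, and let L = K × Bool (Bool discrete). Let T be a bounded linear operator on C(L) and let i ∈ Bool. Then the operator σ_i ∘ π_i ∘ T ∘ σ_i ∘ π_i on C(L) is a weak multiplication on C(L). -/

import Mathlib

open Filter Topology

/-- A bounded linear operator `T` on `C(K, ℝ)` is a *weak multiplier* if for every bounded
pairwise disjoint sequence `(e_n)` in `C(K, ℝ)` and every sequence `(x_n)` in `K` with
`e_n (x_n) = 0` for all `n`, one has `T (e_n) (x_n) → 0`. -/
def IsWeakMultiplier {K : Type*} [TopologicalSpace K] [CompactSpace K]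
    (T : C(K, ℝ) →L[ℝ] C(K, ℝ)) : Prop :=
  ∀ (e : ℕ → C(K, ℝ)) (x : ℕ → K),
    (∃ M : ℝ, ∀ n, ‖e n‖ ≤ M) →
    (∀ i j, i ≠ j → e i * e j = 0) →
    (∀ n, (e n) (x n) = 0) →
    Filter.Tendsto (fun n => (T (e n)) (x n)) Filter.atTop (nhds 0)

/-- An operator on `C(K, ℝ)` is *weakly compact* if the image of the closed unit ball has
compact closure in the weak topology. -/
def IsWeaklyCompactOp {K : Type*} [TopologicalSpace K] [CompactSpace K]
    (S : C(K, ℝ) →L[ℝ] C(K, ℝ)) : Prop :=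
  IsCompact (closure ((toWeakSpace ℝ C(K, ℝ)) '' (S '' Metric.closedBall 0 1)))

/-- An operator on `C(K, ℝ)` is a *weak multiplication* if it has the form `g•I + S` with
`g ∈ C(K, ℝ)` and `S` weakly compact. -/
def IsWeakMultiplication {K : Type*} [TopologicalSpace K] [CompactSpace K]
    (T : C(K, ℝ) →L[ℝ] C(K, ℝ)) : Prop :=
  ∃ (g : C(K, ℝ)) (S : C(K, ℝ) →L[ℝ] C(K, ℝ)),
    IsWeaklyCompactOp S ∧ T = ContinuousLinearMap.mul ℝ C(K, ℝ) g + S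

/-- A subset `A` of a real vector space is *lineable* if `A ∪ {0}` contains an
infinite-dimensional subspace. -/
def Lineable {X : Type*} [AddCommGroup X] [Module ℝ X] (A : Set X) : Prop :=
  ∃ W : Submodule ℝ X, ¬ FiniteDimensional ℝ W ∧ (W : Set X) ⊆ A ∪ {0}

/-- A subset `A` of a real normed space is *spaceable* if `A ∪ {0}` contains a closed
infinite-dimensional subspace. -/
def Spaceable {X : Type*} [NormedAddCommGroup X] [NormedSpace ℝ X] (A : Set X) : Prop :=
  ∃ W : Submodule ℝ X, IsClosed (W : Set X) ∧ ¬ FiniteDimensional ℝ W ∧ (W : Set X) ⊆ A ∪ {0}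

/-- The swap operator `J` on `C(K × Bool, ℝ)`, `(J f)(x, b) = f (x, ¬b)`. -/
noncomputable def swapOp (K : Type*) [TopologicalSpace K] [CompactSpace K] :
    C(K × Bool, ℝ) →L[ℝ] C(K × Bool, ℝ) :=
  LinearMap.mkContinuous
    { toFun := fun f => f.comp
        ⟨fun p => (p.1, !p.2),
          continuous_fst.prodMk ((continuous_of_discreteTopology (f := fun b : Bool => !b)).comp continuous_snd)⟩
      map_add' := fun f g => rfl
      map_smul' := fun c f => rfl }
    1
    (fun f => by
      rw [one_mul]
      exact (ContinuousMap.norm_le _ (norm_nonneg f)).mpr fun p => f.norm_coe_le_norm _)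

@[simp] theorem swapOp_apply {K : Type*} [TopologicalSpace K] [CompactSpace K]
    (f : C(K × Bool, ℝ)) (p : K × Bool) : swapOp K f p = f (p.1, !p.2) := rfl

/-- The restriction operator `π_i : C(K × Bool, ℝ) → C(K, ℝ)`, `π_i(f)(x) = f (x, i)`. -/
noncomputable def piOp (K : Type*) [TopologicalSpace K] [CompactSpace K] (i : Bool) :
    C(K × Bool, ℝ) →L[ℝ] C(K, ℝ) :=
  LinearMap.mkContinuous
    { toFun := fun f => f.comp ⟨fun x => (x, i), continuous_id.prodMk continuous_const⟩
      map_add' := fun f g => rfl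
      map_smul' := fun c f => rfl }
    1
    (fun f => by
      rw [one_mul]
      exact (ContinuousMap.norm_le _ (norm_nonneg f)).mpr fun x => f.norm_coe_le_norm _)

@[simp] theorem piOp_apply {K : Type*} [TopologicalSpace K] [CompactSpace K] (i : Bool)
    (f : C(K × Bool, ℝ)) (x : K) : piOp K i f x = f (x, i) := rfl

/-- The extension operator `σ_i : C(K, ℝ) → C(K × Bool, ℝ)`, `σ_i(g)(x, b) = g x` if `b = i`
and `0` otherwise. -/
noncomputable def sigmaOp (K : Type*) [TopologicalSpace K] [CompactSpace K] (i : Bool) :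
    C(K, ℝ) →L[ℝ] C(K × Bool, ℝ) :=
  LinearMap.mkContinuous
    { toFun := fun g =>
        ⟨fun p => if p.2 = i then g p.1 else 0, by
          have : (fun p : K × Bool => if p.2 = i then g p.1 else 0)
              = fun p : K × Bool => (if p.2 = i then (1 : ℝ) else 0) * g p.1 := by
            funext p
            by_cases h : p.2 = i <;> simp [h]
          rw [this]
          exact (((continuous_of_discreteTopology
              (f := fun b : Bool => if b = i then (1 : ℝ) else 0)).comp
            continuous_snd).mul (g.continuous.comp continuous_fst))⟩
      map_add' := fun f g => by
        ext p
        by_cases h : p.2 = i <;> simp [h]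
      map_smul' := fun c f => by
        ext p
        by_cases h : p.2 = i <;> simp [h] }
    1
    (fun g => by
      rw [one_mul]
      refine (ContinuousMap.norm_le _ (norm_nonneg g)).mpr fun p => ?_
      simp only [ContinuousMap.coe_mk, LinearMap.coe_mk, AddHom.coe_mk]
      by_cases h : p.2 = i
      · simpa [h] using g.norm_coe_le_norm p.1
      · simp [h])

@[simp] theorem sigmaOp_apply {K : Type*} [TopologicalSpace K] [CompactSpace K] (i : Bool)
    (g : C(K, ℝ)) (p : K × Bool) : sigmaOp K i g p = if p.2 = i then g p.1 else 0 := rfl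


instance weakSpace_t2 {E : Type*} [NormedAddCommGroup E] [NormedSpace ℝ E] :
    T2Space (WeakSpace ℝ E) := by
  have hinj : Function.Injective ⇑(topDualPairing ℝ E).flip :=
    separatingDual_iff_injective.mp inferInstance
  exact (WeakBilin.isEmbedding (B := (topDualPairing ℝ E).flip) hinj).t2Space

theorem weaklyCompact_comp {K L : Type*} [TopologicalSpace K] [CompactSpace K] [TopologicalSpace L] [CompactSpace L]
    (S : C(K, ℝ) →L[ℝ] C(K, ℝ)) (hS : IsWeaklyCompactOp S)
    (A : C(L, ℝ) →L[ℝ] C(K, ℝ)) (hA : ‖A‖ ≤ 1) (B : C(K, ℝ) →L[ℝ] C(L, ℝ)) :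
    IsWeaklyCompactOp (B.comp (S.comp A)) := by
  set Bw : WeakSpace ℝ C(K, ℝ) →L[ℝ] WeakSpace ℝ C(L, ℝ) := WeakSpace.map B
  set C : Set (WeakSpace ℝ C(K, ℝ)) :=
    closure ((toWeakSpace ℝ C(K, ℝ)) '' (S '' Metric.closedBall 0 1))
  have hCcomp : IsCompact (Bw '' C) := hS.image Bw.continuous
  have hCclosed : IsClosed (Bw '' C) := hCcomp.isClosed
  have hsub : (toWeakSpace ℝ C(L, ℝ)) '' ((B.comp (S.comp A)) '' Metric.closedBall 0 1)
      ⊆ Bw '' C := by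
    rintro - ⟨-, ⟨f, hf, rfl⟩, rfl⟩
    refine ⟨toWeakSpace ℝ C(K, ℝ) (S (A f)), subset_closure ⟨S (A f), ⟨A f, ?_, rfl⟩, rfl⟩, rfl⟩
    rw [Metric.mem_closedBall, dist_zero_right] at hf ⊢
    calc ‖A f‖ ≤ ‖A‖ * ‖f‖ := A.le_opNorm f
    _ ≤ 1 * 1 := by
        exact mul_le_mul hA hf (norm_nonneg f) zero_le_one
    _ = 1 := one_mul 1
  exact hCcomp.of_isClosed_subset isClosed_closure (closure_minimal hsub hCclosed)

/-- If every operator on `C(K, ℝ)` is a weak multiplication, then for every operator `T` on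
`C(K × Bool, ℝ)` and every `i : Bool`, the operator `σ_i ∘ π_i ∘ T ∘ σ_i ∘ π_i` is a weak
multiplication on `C(K × Bool, ℝ)`. -/
theorem diagonal_component_weakMultiplication
    {K : Type*} [TopologicalSpace K] [CompactSpace K] [T2Space K]
    (hfew : ∀ S : C(K, ℝ) →L[ℝ] C(K, ℝ), IsWeakMultiplication S)
    (T : C(K × Bool, ℝ) →L[ℝ] C(K × Bool, ℝ)) (i : Bool) :
    IsWeakMultiplication
      ((sigmaOp K i).comp ((piOp K i).comp (T.comp ((sigmaOp K i).comp (piOp K i))))) := by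
  set T0 : C(K, ℝ) →L[ℝ] C(K, ℝ) := (piOp K i).comp (T.comp (sigmaOp K i)) with hT0
  obtain ⟨g, S, hS, hTg⟩ := hfew T0
  refine ⟨sigmaOp K i g, (sigmaOp K i).comp (S.comp (piOp K i)), ?_, ?_⟩
  · refine weaklyCompact_comp S hS (piOp K i) ?_ (sigmaOp K i)
    refine ContinuousLinearMap.opNorm_le_bound _ zero_le_one fun f => ?_
    rw [one_mul]
    refine (ContinuousMap.norm_le _ (norm_nonneg f)).mpr fun x => f.norm_coe_le_norm _
  · ext f p
    have h1 : (piOp K i) (T ((sigmaOp K i) ((piOp K i) f))) = T0 ((piOp K i) f) := rfl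
    have h2 := congrFun (congrArg DFunLike.coe (congrFun (congrArg DFunLike.coe hTg)
      ((piOp K i) f))) p.1
    simp only [ContinuousLinearMap.coe_comp', Function.comp_apply, sigmaOp_apply,
      ContinuousLinearMap.add_apply, ContinuousMap.add_apply, ContinuousLinearMap.mul_apply',
      ContinuousMap.mul_apply, piOp_apply] at h2 ⊢
    have h2' : (T ((sigmaOp K i) ((piOp K i) f))) (p.1, i)
        = g p.1 * f (p.1, i) + (S ((piOp K i) f)) p.1 := h2
    rw [h2']
    by_cases hp : p.2 = i
    · rcases p with ⟨x, b⟩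
      subst hp
      simp
    · simp [hp]
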